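/- Let (A, E) be an exact category. If the class of admissible morphisms is closed under composition, then A is abelian and E is the class of all kernel-cokernel pairs. In particular, every morphism f: X → Y factors as the section [1, f]^T : X → X ⊕ Y followed by the retraction [0, 1] : X ⊕ Y → Y, both of which are admissible, hence every morphism is admissible. -/

import Mathlib

open CategoryTheory CategoryTheory.Limits

universe v u

variable {C : Type u} [Category.{v} C] [Preadditive C]

/-- `(i, d)` is a kernel-cokernel pair. -/
structure IsKernelCokernelPair {A B X : C} (i : A ⟶ B) (d : B ⟶ X) : Prop where
  w : i ≫ d = 0
  isKernel : Nonempty (IsLimit (KernelFork.ofι i w))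
  isCokernel : Nonempty (IsColimit (CokernelCofork.ofπ d w))

/-- A Quillen exact structure on an additive category. -/
structure ExactStructure (C : Type u) [Category.{v} C] [Preadditive C] :
    Type (max u v) where
  E : ∀ ⦃A B X : C⦄, (A ⟶ B) → (B ⟶ X) → Prop
  pair : ∀ ⦃A B X : C⦄ {i : A ⟶ B} {d : B ⟶ X}, E i d → IsKernelCokernelPair i d
  iso_closed : ∀ ⦃A B X A' B' X' : C⦄ {i : A ⟶ B} {d : B ⟶ X} {i' : A' ⟶ B'} {d' : B' ⟶ X'}
      (eA : A ≅ A') (eB : B ≅ B') (eX : X ≅ X'),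
      E i d → i ≫ eB.hom = eA.hom ≫ i' → d ≫ eX.hom = eB.hom ≫ d' → E i' d'
  admMono_id : ∀ A : C, ∃ (X : C) (d : A ⟶ X), E (𝟙 A) d
  admEpi_id : ∀ A : C, ∃ (X : C) (i : X ⟶ A), E i (𝟙 A)
  admMono_comp : ∀ ⦃A B D : C⦄ (f : A ⟶ B) (g : B ⟶ D),
      (∃ (X : C) (d : B ⟶ X), E f d) → (∃ (X : C) (d : D ⟶ X), E g d) →
      ∃ (X : C) (d : D ⟶ X), E (f ≫ g) d
  admEpi_comp : ∀ ⦃A B D : C⦄ (f : A ⟶ B) (g : B ⟶ D),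
      (∃ (X : C) (i : X ⟶ A), E i f) → (∃ (X : C) (i : X ⟶ B), E i g) →
      ∃ (X : C) (i : X ⟶ A), E i (f ≫ g)
  pushout_admMono : ∀ ⦃A B Z : C⦄ (i : A ⟶ B) (f : A ⟶ Z),
      (∃ (X : C) (d : B ⟶ X), E i d) →
      ∃ (D : C) (g : B ⟶ D) (j : Z ⟶ D) (w : i ≫ g = f ≫ j),
        Nonempty (IsColimit (PushoutCocone.mk g j w)) ∧ ∃ (X : C) (d : D ⟶ X), E j d
  pullback_admEpi : ∀ ⦃B D Z : C⦄ (h : B ⟶ D) (g : Z ⟶ D),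
      (∃ (X : C) (i : X ⟶ B), E i h) →
      ∃ (A : C) (f : A ⟶ B) (k : A ⟶ Z) (w : f ≫ h = k ≫ g),
        Nonempty (IsLimit (PullbackCone.mk f k w)) ∧ ∃ (X : C) (i : X ⟶ A), E i k

namespace ExactStructure

variable (Ex : ExactStructure C)

/-- `i` is an admissible monic. -/
def AdmMono {A B : C} (i : A ⟶ B) : Prop := ∃ (X : C) (d : B ⟶ X), Ex.E i d

/-- `d` is an admissible epic. -/
def AdmEpi {B X : C} (d : B ⟶ X) : Prop := ∃ (A : C) (i : A ⟶ B), Ex.E i d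

/-- `f` is admissible: it factors as an admissible epic followed by an admissible monic. -/
def Admissible {A B : C} (f : A ⟶ B) : Prop :=
  ∃ (Z : C) (e : A ⟶ Z) (m : Z ⟶ B), Ex.AdmEpi e ∧ Ex.AdmMono m ∧ e ≫ m = f

/-- `E` consists of all kernel-cokernel pairs. -/
def IsMaximalAll : Prop :=
  ∀ ⦃A B X : C⦄ (i : A ⟶ B) (d : B ⟶ X), IsKernelCokernelPair i d → Ex.E i d

/-- `S` is `E`-simple. -/
def ESimple (S : C) : Prop :=
  ¬ IsZero S ∧ ∀ ⦃A : C⦄ (i : A ⟶ S), Ex.AdmMono i → IsZero A ∨ IsIso i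

end ExactStructure

/-- `A` is abelian: it has finite products, kernels, cokernels, every mono is normal
and every epi is normal. -/
def IsAbelianCat (C : Type u) [Category.{v} C] [Preadditive C] : Prop :=
  HasFiniteProducts C ∧ HasKernels C ∧ HasCokernels C ∧
  (∀ ⦃X Y : C⦄ (f : X ⟶ Y), Mono f → Nonempty (NormalMono f)) ∧
  (∀ ⦃X Y : C⦄ (f : X ⟶ Y), Epi f → Nonempty (NormalEpi f))

/-- An admissible (`E`-)subobject of `X`. -/
structure ESub (Ex : ExactStructure C) (X : C) where
  obj : C
  ι : obj ⟶ X
  adm : Ex.AdmMono ι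

/-- The order on `E`-subobjects of `X`. -/
def ESubLe (Ex : ExactStructure C) {X : C} (s t : ESub Ex X) : Prop :=
  ∃ h : s.obj ⟶ t.obj, Ex.AdmMono h ∧ h ≫ t.ι = s.ι

/-- Two `E`-subobjects are isomorphic as subobjects. -/
def ESubEquiv (Ex : ExactStructure C) {X : C} (s t : ESub Ex X) : Prop :=
  ESubLe Ex s t ∧ ESubLe Ex t s

/-- The admissible intersection axiom (AI). -/
def AIAxiom (Ex : ExactStructure C) : Prop :=
  ∀ ⦃B Z D : C⦄ (g : B ⟶ D) (j : Z ⟶ D), Ex.AdmMono g → Ex.AdmMono j →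
    ∃ (A : C) (f : A ⟶ B) (f' : A ⟶ Z) (w : f ≫ g = f' ≫ j),
      Ex.AdmMono f ∧ Ex.AdmMono f' ∧ Nonempty (IsLimit (PullbackCone.mk f f' w))

/-- The admissible sum axiom (AS): for every pullback square of admissible monics,
the induced map from the pushout to the common codomain is an admissible monic. -/
def ASAxiom (Ex : ExactStructure C) : Prop :=
  ∀ ⦃A B Z D : C⦄ (f : A ⟶ B) (f' : A ⟶ Z) (g : B ⟶ D) (j : Z ⟶ D) (w : f ≫ g = f' ≫ j),
    Ex.AdmMono f → Ex.AdmMono f' → Ex.AdmMono g → Ex.AdmMono j →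
    IsLimit (PullbackCone.mk f f' w) →
    ∀ ⦃P : C⦄ (l : B ⟶ P) (k : Z ⟶ P) (w' : f ≫ l = f' ≫ k),
      IsColimit (PushoutCocone.mk l k w') →
      ∀ u : P ⟶ D, l ≫ u = g → k ≫ u = j → Ex.AdmMono u

/-- An AIS-category: an AI-category satisfying the admissible sum axiom. -/
def AISCat (Ex : ExactStructure C) : Prop := AIAxiom Ex ∧ ASAxiom Ex

/-- `f` is a kernel of some morphism. -/
def IsKernelMor {A B : C} (f : A ⟶ B) : Prop :=
  ∃ (Z : C) (g : B ⟶ Z) (w : f ≫ g = 0), Nonempty (IsLimit (KernelFork.ofι f w))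

/-- `f` is a cokernel of some morphism. -/
def IsCokernelMor {A B : C} (f : A ⟶ B) : Prop :=
  ∃ (Z : C) (g : Z ⟶ A) (w : g ≫ f = 0), Nonempty (IsColimit (CokernelCofork.ofπ f w))

/-- A quasi-abelian category: pre-abelian, kernels are stable under pushout and
cokernels are stable under pullback. -/
def IsQuasiAbelian (C : Type u) [Category.{v} C] [Preadditive C] : Prop :=
  HasKernels C ∧ HasCokernels C ∧
  (∀ ⦃A B Z : C⦄ (f : A ⟶ B) (t : A ⟶ Z), IsKernelMor f →
    ∀ ⦃P : C⦄ (s : B ⟶ P) (s' : Z ⟶ P) (w : f ≫ s = t ≫ s'),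
      IsColimit (PushoutCocone.mk s s' w) → IsKernelMor s') ∧
  (∀ ⦃A B Z : C⦄ (f : B ⟶ A) (t : Z ⟶ A), IsCokernelMor f →
    ∀ ⦃P : C⦄ (s : P ⟶ B) (s' : P ⟶ Z) (w : s ≫ f = s' ≫ t),
      IsLimit (PullbackCone.mk s s' w) → IsCokernelMor s')

/-- An `E`-composition series of length `n` for `X`. -/
structure CompSeries (Ex : ExactStructure C) (X : C) (n : ℕ) where
  obj : Fin (n + 1) → C
  map : ∀ i : Fin n, obj i.castSucc ⟶ obj i.succ
  zero : IsZero (obj 0)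
  top : obj (Fin.last n) ≅ X
  adm : ∀ i : Fin n, Ex.AdmMono (map i)
  simpleFactor : ∀ i : Fin n,
    ∃ (Q : C) (d : obj i.succ ⟶ Q), Ex.E (map i) d ∧ Ex.ESimple Q

/-- Two composition series are equivalent: there is a bijection of indices matching
isomorphic composition factors. -/
def CompSeries.EquivSeries {Ex : ExactStructure C} {X : C} {n m : ℕ}
    (s : CompSeries Ex X n) (t : CompSeries Ex X m) : Prop :=
  ∃ σ : Fin n ≃ Fin m, ∀ (i : Fin n) ⦃Q Q' : C⦄
    (d : s.obj i.succ ⟶ Q) (d' : t.obj (σ i).succ ⟶ Q'),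
    Ex.E (s.map i) d → Ex.E (t.map (σ i)) d' → Nonempty (Q ≅ Q')

/-- The Jordan-Hölder property for an exact structure. -/
def JordanHolder (Ex : ExactStructure C) : Prop :=
  ∀ (X : C) (n m : ℕ) (s : CompSeries Ex X n) (t : CompSeries Ex X m),
    n = m ∧ s.EquivSeries t

/-- A maximal `E`-subobject: one with `E`-simple cokernel. -/
def ESub.IsMax {Ex : ExactStructure C} {X : C} (A : ESub Ex X) : Prop :=
  ∃ (Q : C) (d : X ⟶ Q), Ex.E A.ι d ∧ Ex.ESimple Q

/-- `Y` belongs to the generalized intersection `Int_X(A, B)`: it is a maximal common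
`E`-subobject of `A` and `B`. -/
def InInt {Ex : ExactStructure C} {X : C} (A B Y : ESub Ex X) : Prop :=
  ESubLe Ex Y A ∧ ESubLe Ex Y B ∧
  ∀ Z : ESub Ex X, ESubLe Ex Z A → ESubLe Ex Z B → ESubLe Ex Y Z → ESubLe Ex Z Y

/-- A diamond exact category. -/
def DiamondCat (Ex : ExactStructure C) : Prop :=
  ∀ (X : C) (A B : ESub Ex X), A.IsMax → B.IsMax → ¬ ESubEquiv Ex A B →
    ∀ Y : ESub Ex X, InInt A B Y →
      (∀ (h : Y.obj ⟶ A.obj), Ex.AdmMono h → h ≫ A.ι = Y.ι →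
        ∀ ⦃Q : C⦄ (d : A.obj ⟶ Q), Ex.E h d → Ex.ESimple Q) ∧
      (∀ (h : Y.obj ⟶ B.obj), Ex.AdmMono h → h ≫ B.ι = Y.ι →
        ∀ ⦃Q : C⦄ (d : B.obj ⟶ Q), Ex.E h d → Ex.ESimple Q) ∧
      (∀ (hA : Y.obj ⟶ A.obj) (hB : Y.obj ⟶ B.obj), Ex.AdmMono hA → Ex.AdmMono hB →
        hA ≫ A.ι = Y.ι → hB ≫ B.ι = Y.ι →
        ∀ ⦃QXA QAY QXB QBY : C⦄
          (dXA : X ⟶ QXA) (dAY : A.obj ⟶ QAY) (dXB : X ⟶ QXB) (dBY : B.obj ⟶ QBY),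
          Ex.E A.ι dXA → Ex.E hA dAY → Ex.E B.ι dXB → Ex.E hB dBY →
          (Nonempty (QXA ≅ QXB) ∧ Nonempty (QAY ≅ QBY)) ∨
          (Nonempty (QXA ≅ QBY) ∧ Nonempty (QAY ≅ QXB)))


section AuxProofs

open ZeroObject

variable (Ex : ExactStructure C)

theorem aux_E_postIso {A B B' X : C} {i : A ⟶ B} {d : B ⟶ X} (hE : Ex.E i d) (φ : B ≅ B') :
    Ex.E (i ≫ φ.hom) (φ.inv ≫ d) :=
  Ex.iso_closed (Iso.refl A) φ (Iso.refl X) hE (by simp) (by simp)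

theorem aux_admMono_postIso {A B B' : C} {i : A ⟶ B} (hi : Ex.AdmMono i) (φ : B ≅ B') :
    Ex.AdmMono (i ≫ φ.hom) := by
  obtain ⟨X, d, hE⟩ := hi
  exact ⟨X, φ.inv ≫ d, aux_E_postIso Ex hE φ⟩

theorem aux_E_preIso {A A' B X : C} {i : A ⟶ B} {d : B ⟶ X} (hE : Ex.E i d) (φ : A' ≅ A) :
    Ex.E (φ.hom ≫ i) d :=
  Ex.iso_closed φ.symm (Iso.refl B) (Iso.refl X) hE (by simp) (by simp)

theorem aux_admEpi_preIso {B B' X : C} {d : B ⟶ X} (hd : Ex.AdmEpi d) (φ : B' ≅ B) :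
    Ex.AdmEpi (φ.hom ≫ d) := by
  obtain ⟨A, i, hE⟩ := hd
  exact ⟨A, i ≫ φ.inv, Ex.iso_closed (Iso.refl A) φ.symm (Iso.refl X) hE (by simp) (by simp)⟩

theorem aux_admMono_zero [HasZeroObject C] (B : C) : Ex.AdmMono (0 : (0 : C) ⟶ B) := by
  obtain ⟨X, i, hE⟩ := Ex.admEpi_id B
  have hw := (Ex.pair hE).w
  have hi0 : i = 0 := by simpa using hw
  obtain ⟨hK⟩ := (Ex.pair hE).isKernel
  have hmono : Mono i := mono_of_isLimit_fork hK
  rw [hi0] at hmono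
  have hX : IsZero X := @IsZero.of_mono_zero _ _ _ X B hmono
  refine ⟨B, 𝟙 B, Ex.iso_closed hX.isoZero (Iso.refl B) (Iso.refl B) hE ?_ (by simp)⟩
  simp [hi0]

theorem aux_admEpi_zero [HasZeroObject C] (B : C) : Ex.AdmEpi (0 : B ⟶ (0 : C)) := by
  obtain ⟨X, d, hE⟩ := Ex.admMono_id B
  have hw := (Ex.pair hE).w
  have hd0 : d = 0 := by simpa using hw
  obtain ⟨hC⟩ := (Ex.pair hE).isCokernel
  have hepi : Epi d := epi_of_isColimit_cofork hC
  rw [hd0] at hepi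
  have hX : IsZero X := @IsZero.of_epi_zero _ _ _ B X hepi
  refine ⟨B, 𝟙 B, Ex.iso_closed (Iso.refl B) (Iso.refl B) hX.isoZero hE (by simp) ?_⟩
  simp [hd0]

theorem aux_admMono_inl [HasZeroObject C] [HasBinaryBiproducts C] (A B : C) :
    Ex.AdmMono (biprod.inl : A ⟶ A ⊞ B) := by
  obtain ⟨D, g, j, w, ⟨hc⟩, hj⟩ :=
    Ex.pushout_admMono (0 : (0 : C) ⟶ B) (0 : (0 : C) ⟶ A) (aux_admMono_zero Ex B)
  let φ : D ⟶ A ⊞ B :=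
    PushoutCocone.IsColimit.desc hc (biprod.inr : B ⟶ A ⊞ B) (biprod.inl : A ⟶ A ⊞ B) (by simp)
  have hgφ : g ≫ φ = biprod.inr := PushoutCocone.IsColimit.inl_desc hc _ _ _
  have hjφ : j ≫ φ = biprod.inl := PushoutCocone.IsColimit.inr_desc hc _ _ _
  let ψ : A ⊞ B ⟶ D := biprod.desc j g
  have h1 : φ ≫ ψ = 𝟙 D := by
    apply PushoutCocone.IsColimit.hom_ext hc
    · simp only [PushoutCocone.mk_inl, ← Category.assoc, hgφ]
      change g ≫ φ ≫ ψ = g ≫ 𝟙 D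
      rw [← Category.assoc, hgφ]
      simp [ψ]
    · simp only [PushoutCocone.mk_inr, ← Category.assoc, hjφ]
      change j ≫ φ ≫ ψ = j ≫ 𝟙 D
      rw [← Category.assoc, hjφ]
      simp [ψ]
  have h2 : ψ ≫ φ = 𝟙 (A ⊞ B) := by
    ext <;> simp [ψ, reassoc_of% hjφ, reassoc_of% hgφ]
  have := aux_admMono_postIso Ex hj (⟨φ, ψ, h1, h2⟩ : D ≅ A ⊞ B)
  simpa [hjφ] using this

theorem aux_admEpi_snd [HasZeroObject C] [HasBinaryBiproducts C] (A B : C) :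
    Ex.AdmEpi (biprod.snd : A ⊞ B ⟶ B) := by
  obtain ⟨P, f, k, w, ⟨hl⟩, hk⟩ :=
    Ex.pullback_admEpi (0 : A ⟶ (0 : C)) (0 : B ⟶ (0 : C)) (aux_admEpi_zero Ex A)
  let u : A ⊞ B ⟶ P :=
    PullbackCone.IsLimit.lift hl (biprod.fst : A ⊞ B ⟶ A) (biprod.snd : A ⊞ B ⟶ B) (by simp)
  have huf : u ≫ f = biprod.fst := PullbackCone.IsLimit.lift_fst hl _ _ _
  have huk : u ≫ k = biprod.snd := PullbackCone.IsLimit.lift_snd hl _ _ _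
  let v : P ⟶ A ⊞ B := biprod.lift f k
  have h1 : u ≫ v = 𝟙 (A ⊞ B) := by
    ext <;> simp [v, huf, huk]
  have h2 : v ≫ u = 𝟙 P := by
    apply PullbackCone.IsLimit.hom_ext hl
    · simp only [PullbackCone.mk_fst, Category.assoc, huf, Category.id_comp]
      change (v ≫ u) ≫ f = 𝟙 P ≫ f
      rw [Category.assoc, huf]
      simp [v]
    · simp only [PullbackCone.mk_snd, Category.assoc, huk, Category.id_comp]
      change (v ≫ u) ≫ k = 𝟙 P ≫ k
      rw [Category.assoc, huk]
      simp [v]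
  have := aux_admEpi_preIso Ex hk (⟨u, v, h1, h2⟩ : A ⊞ B ≅ P)
  simpa [huk] using this

theorem aux_isIso_of_mono_admEpi {B X : C} {e : B ⟶ X} (he : Ex.AdmEpi e) (hm : Mono e) :
    IsIso e := by
  obtain ⟨A, i, hE⟩ := he
  have w := (Ex.pair hE).w
  obtain ⟨hc⟩ := (Ex.pair hE).isCokernel
  have hi0 : i = 0 := by rw [← cancel_mono e, zero_comp, w]
  have hepi : Epi e := epi_of_isColimit_cofork hc
  obtain ⟨u, hu⟩ := CokernelCofork.IsColimit.desc' hc (𝟙 B) (by simp [hi0])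
  have hu' : e ≫ u = 𝟙 B := by simpa using hu
  refine ⟨u, hu', ?_⟩
  rw [← cancel_epi e]
  simp [reassoc_of% hu']

theorem aux_admMono_mono {A B : C} {i : A ⟶ B} (hi : Ex.AdmMono i) : Mono i := by
  obtain ⟨X, d, hE⟩ := hi
  obtain ⟨hK⟩ := (Ex.pair hE).isKernel
  exact mono_of_isLimit_fork hK


theorem aux_admEpi_epi {B X : C} {d : B ⟶ X} (hd : Ex.AdmEpi d) : Epi d := by
  obtain ⟨A, i, hE⟩ := hd
  obtain ⟨hC⟩ := (Ex.pair hE).isCokernel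
  exact epi_of_isColimit_cofork hC

theorem aux_isIso_of_epi_admMono {A B : C} {m : A ⟶ B} (hm : Ex.AdmMono m) (he : Epi m) :
    IsIso m := by
  obtain ⟨X, d, hE⟩ := hm
  have w := (Ex.pair hE).w
  obtain ⟨hK⟩ := (Ex.pair hE).isKernel
  have hd0 : d = 0 := by rw [← cancel_epi m, comp_zero, w]
  have hmono : Mono m := mono_of_isLimit_fork hK
  obtain ⟨u, hu⟩ := KernelFork.IsLimit.lift' hK (𝟙 B) (by simp [hd0])
  have hu' : u ≫ m = 𝟙 B := by simpa using hu
  refine ⟨u, ?_, hu'⟩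
  rw [← cancel_mono m]
  simp [hu']

end AuxProofs

/-- If admissible morphisms are closed under composition, then the category is abelian,
the exact structure is the class of all kernel-cokernel pairs, every morphism factors
as the admissible section `[1, f]ᵀ` followed by the admissible retraction `[0, 1]`,
and every morphism is admissible. -/
theorem stmt1 [HasZeroObject C] [HasBinaryBiproducts C] (Ex : ExactStructure C)
    (h : ∀ ⦃X Y Z : C⦄ (f : X ⟶ Y) (g : Y ⟶ Z),
      Ex.Admissible f → Ex.Admissible g → Ex.Admissible (f ≫ g)) :
    IsAbelianCat C ∧ Ex.IsMaximalAll ∧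
    (∀ ⦃X Y : C⦄ (f : X ⟶ Y),
      Ex.Admissible (biprod.lift (𝟙 X) f) ∧ Ex.Admissible (biprod.snd : X ⊞ Y ⟶ Y) ∧
      biprod.lift (𝟙 X) f ≫ biprod.snd = f) ∧
    (∀ ⦃X Y : C⦄ (f : X ⟶ Y), Ex.Admissible f) := by
  have admOfMono : ∀ {A B : C} (m : A ⟶ B), Ex.AdmMono m → Ex.Admissible m := by
    intro A B m hm
    exact ⟨A, 𝟙 A, m, Ex.admEpi_id A, hm, Category.id_comp m⟩
  have admOfEpi : ∀ {A B : C} (e : A ⟶ B), Ex.AdmEpi e → Ex.Admissible e := by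
    intro A B e he
    exact ⟨B, e, 𝟙 B, he, Ex.admMono_id B, Category.comp_id e⟩
  have part3 : ∀ ⦃X Y : C⦄ (f : X ⟶ Y),
      Ex.Admissible (biprod.lift (𝟙 X) f) ∧ Ex.Admissible (biprod.snd : X ⊞ Y ⟶ Y) ∧
      biprod.lift (𝟙 X) f ≫ biprod.snd = f := by
    intro X Y f
    refine ⟨?_, admOfEpi _ (aux_admEpi_snd Ex X Y), by simp⟩
    have h1 : biprod.lift (𝟙 X) f = biprod.inl ≫ (Biprod.unipotentUpper f).hom := by
      ext <;> simp [Biprod.unipotentUpper, Biprod.ofComponents]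
    rw [h1]
    exact admOfMono _ (aux_admMono_postIso Ex (aux_admMono_inl Ex X Y) _)
  have allAdm : ∀ ⦃X Y : C⦄ (f : X ⟶ Y), Ex.Admissible f := by
    intro X Y f
    have := h _ _ (part3 f).1 (part3 f).2.1
    simpa [(part3 f).2.2] using this
  have maximal : Ex.IsMaximalAll := by
    intro A B X i d hpair
    obtain ⟨hKi⟩ := hpair.isKernel
    obtain ⟨hCd⟩ := hpair.isCokernel
    have hmi : Mono i := mono_of_isLimit_fork hKi
    obtain ⟨Z, e, m, he, hm, hfac⟩ := allAdm i
    haveI : Mono (e ≫ m) := by rwa [hfac]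
    haveI : Mono e := mono_of_mono e m
    haveI : IsIso e := aux_isIso_of_mono_admEpi Ex he inferInstance
    obtain ⟨Q, d', hEm⟩ := hm
    have hEi : Ex.E i d' := by
      have := aux_E_preIso Ex hEm (asIso e)
      simpa [hfac] using this
    have w' := (Ex.pair hEi).w
    obtain ⟨hC'⟩ := (Ex.pair hEi).isCokernel
    have hθ : d' ≫ (hC'.coconePointUniqueUpToIso hCd).hom = d := by
      simpa using IsColimit.comp_coconePointUniqueUpToIso_hom hC' hCd WalkingParallelPair.one
    refine Ex.iso_closed (Iso.refl A) (Iso.refl B) (hC'.coconePointUniqueUpToIso hCd)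
      hEi (by simp) ?_
    simp only [Iso.refl_hom, Category.id_comp]
    exact hθ
  have hasKer : HasKernels C := by
    refine ⟨fun {X Y} f => ?_⟩
    obtain ⟨Z, e, m, ⟨A, i, hEe⟩, hm, hfac⟩ := allAdm f
    haveI : Mono m := aux_admMono_mono Ex hm
    obtain ⟨hK⟩ := (Ex.pair hEe).isKernel
    exact HasLimit.mk ⟨_, isKernelCompMono hK m hfac.symm⟩
  have hasCoker : HasCokernels C := by
    refine ⟨fun {X Y} f => ?_⟩
    obtain ⟨Z, e, m, he, ⟨Q, d, hEm⟩, hfac⟩ := allAdm f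
    haveI : Epi e := aux_admEpi_epi Ex he
    obtain ⟨hC⟩ := (Ex.pair hEm).isCokernel
    exact HasColimit.mk ⟨_, isCokernelEpiComp hC e hfac.symm⟩
  have normMono : ∀ ⦃X Y : C⦄ (f : X ⟶ Y), Mono f → Nonempty (NormalMono f) := by
    intro X Y f hf
    obtain ⟨Z, e, m, he, hm, hfac⟩ := allAdm f
    haveI : Mono f := hf
    haveI : Mono (e ≫ m) := by rwa [hfac]
    haveI : Mono e := mono_of_mono e m
    haveI : IsIso e := aux_isIso_of_mono_admEpi Ex he inferInstance
    obtain ⟨Q, d, hEm⟩ := hm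
    have wm := (Ex.pair hEm).w
    obtain ⟨hK⟩ := (Ex.pair hEm).isKernel
    refine ⟨⟨Q, d, by rw [← hfac, Category.assoc, wm, comp_zero], ?_⟩⟩
    refine KernelFork.IsLimit.ofι' f _ (fun {T} k hk => ?_)
    obtain ⟨l, hl⟩ := KernelFork.IsLimit.lift' hK k hk
    refine ⟨l ≫ inv e, ?_⟩
    rw [← hfac]
    simpa using hl
  have normEpi : ∀ ⦃X Y : C⦄ (f : X ⟶ Y), Epi f → Nonempty (NormalEpi f) := by
    intro X Y f hf
    obtain ⟨Z, e, m, he, hm, hfac⟩ := allAdm f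
    haveI : Epi f := hf
    haveI : Epi (e ≫ m) := by rwa [hfac]
    haveI : Epi m := epi_of_epi e m
    haveI : IsIso m := aux_isIso_of_epi_admMono Ex hm inferInstance
    obtain ⟨A, i, hEe⟩ := he
    have we := (Ex.pair hEe).w
    obtain ⟨hC⟩ := (Ex.pair hEe).isCokernel
    refine ⟨⟨A, i, by rw [← hfac, ← Category.assoc, we, zero_comp], ?_⟩⟩
    refine CokernelCofork.IsColimit.ofπ' f _ (fun {T} k hk => ?_)
    obtain ⟨l, hl⟩ := CokernelCofork.IsColimit.desc' hC k hk
    refine ⟨inv m ≫ l, ?_⟩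
    rw [← hfac]
    simpa using hl
  exact ⟨⟨hasFiniteProducts_of_has_binary_and_terminal, hasKer, hasCoker, normMono, normEpi⟩,
    maximal, part3, allAdm⟩
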